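/- arXiv:1608.03146 — 2 statements merged into one kernel-verified Lean document; each statement's English description precedes it below -/
import Mathlib

section
/- Let X be a cosmic Tychonoff (completely regular Hausdorff) space. Then C_p(X) is an Ascoli space if and only if C_p(X) is κ-Fréchet–Urysohn. -/
/-- `C_p(X)`: the continuous real-valued functions on `X`, considered with the topology
of pointwise convergence (as a subspace of the product `ℝ^X`). -/
def Cp (X : Type*) [TopologicalSpace X] : Type _ := C(X, ℝ)

/-- The topology of pointwise convergence on `Cp X`. -/
instance Cp.instTopologicalSpace (X : Type*) [TopologicalSpace X] :
    TopologicalSpace (Cp X) :=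
  TopologicalSpace.induced (fun f : C(X, ℝ) => (f : X → ℝ)) Pi.topologicalSpace

/-- A set `K` of continuous real-valued functions on `Z` is evenly continuous if for
every `x ∈ Z`, `f ∈ K` and open `V ∋ f x` there are an open `U ∋ x` and an open
`W ∋ f x` such that every `g ∈ K` with `g x ∈ W` maps `U` into `V`. -/
def EvenlyContinuousOn (Z : Type*) [TopologicalSpace Z] (K : Set C(Z, ℝ)) : Prop :=
  ∀ x : Z, ∀ f ∈ K, ∀ V : Set ℝ, IsOpen V → f x ∈ V →
    ∃ U : Set Z, IsOpen U ∧ x ∈ U ∧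
      ∃ W : Set ℝ, IsOpen W ∧ f x ∈ W ∧
        ∀ g ∈ K, g x ∈ W → ∀ y ∈ U, g y ∈ V

/-- A space `Z` is Ascoli if every compact subset of `C_k(Z)` (continuous real-valued
functions with the compact-open topology) is evenly continuous. -/
def AscoliSpace (Z : Type*) [TopologicalSpace Z] : Prop :=
  ∀ K : Set C(Z, ℝ), IsCompact K → EvenlyContinuousOn Z K

/-- A space `Z` is κ-Fréchet–Urysohn if for every open `A ⊆ Z` and every `z` in the
closure of `A` there is a sequence in `A` converging to `z`. -/
def KappaFrechetUrysohn (Z : Type*) [TopologicalSpace Z] : Prop :=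
  ∀ A : Set Z, IsOpen A → ∀ z ∈ closure A,
    ∃ u : ℕ → Z, (∀ n, u n ∈ A) ∧ Filter.Tendsto u Filter.atTop (nhds z)

/-- A space is cosmic if it has a countable network. -/
def Cosmic (X : Type*) [TopologicalSpace X] : Prop :=
  ∃ N : Set (Set X), N.Countable ∧
    ∀ x : X, ∀ U : Set X, IsOpen U → x ∈ U → ∃ n ∈ N, x ∈ n ∧ n ⊆ U

namespace CpAux
open Filter Topology Set

variable {X : Type*} [TopologicalSpace X]

def toCM (f : Cp X) : C(X, ℝ) := f
def ofCM (f : C(X, ℝ)) : Cp X := f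

lemma continuous_coe : Continuous (fun f : Cp X => (toCM f : X → ℝ)) :=
  continuous_induced_dom

lemma continuous_ev (x : X) : Continuous (fun f : Cp X => toCM f x) :=
  (continuous_apply x).comp continuous_coe

lemma exists_basic {A : Set (Cp X)} (hA : IsOpen A) {g : Cp X} (hg : g ∈ A) :
    ∃ (E : Finset X) (δ : ℝ), 0 < δ ∧
      ∀ h : Cp X, (∀ x ∈ E, |toCM h x - toCM g x| < δ) → h ∈ A := by
  obtain ⟨A', hA', hpre⟩ := isOpen_induced_iff.mp hA
  have hgA' : (toCM g : X → ℝ) ∈ A' := by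
    have : g ∈ (fun f : C(X,ℝ) => (f : X → ℝ)) ⁻¹' A' := hpre ▸ hg
    exact this
  obtain ⟨I, u, hu, hsub⟩ := isOpen_pi_iff.mp hA' _ hgA'
  have hd : ∀ i ∈ I, ∃ d : ℝ, 0 < d ∧ Metric.ball (toCM g i) d ⊆ u i := by
    intro i hi
    obtain ⟨d, hd, hball⟩ := Metric.isOpen_iff.mp (hu i hi).1 _ (hu i hi).2
    exact ⟨d, hd, hball⟩
  choose! d hd0 hball using hd
  rcases I.eq_empty_or_nonempty with rfl | hne
  · refine ⟨∅, 1, one_pos, fun h _ => ?_⟩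
    have : (toCM h : X → ℝ) ∈ A' := hsub (by simp)
    rw [← hpre]; exact this
  · refine ⟨I, I.inf' hne d, ?_, fun h hh => ?_⟩
    · rw [Finset.lt_inf'_iff]; exact fun i hi => hd0 i hi
    · have : (toCM h : X → ℝ) ∈ A' := by
        apply hsub
        intro i hi
        apply hball i hi
        rw [Metric.mem_ball, Real.dist_eq]
        exact lt_of_lt_of_le (hh i hi) (Finset.inf'_le d hi)
      rw [← hpre]; exact this

lemma closure_basic {A : Set (Cp X)} {z₀ : Cp X} (hz : z₀ ∈ closure A)
    (P : Finset X) {ε : ℝ} (hε : 0 < ε) :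
    ∃ g ∈ A, ∀ x ∈ P, |toCM g x - toCM z₀ x| < ε := by
  set N : Set (Cp X) := ⋂ x ∈ P, (fun h : Cp X => toCM h x) ⁻¹' Metric.ball (toCM z₀ x) ε with hN
  have hNopen : IsOpen N := isOpen_biInter_finset fun x _ =>
    (Metric.isOpen_ball).preimage (continuous_ev x)
  have hz₀N : z₀ ∈ N := by
    simp only [hN, Set.mem_iInter, Set.mem_preimage, Metric.mem_ball, dist_self]
    intro x _; exact hε
  obtain ⟨g, hgN, hgA⟩ := _root_.mem_closure_iff.mp hz N hNopen hz₀N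
  refine ⟨g, hgA, fun x hx => ?_⟩
  have := Set.mem_iInter₂.mp hgN x hx
  rwa [Set.mem_preimage, Metric.mem_ball, Real.dist_eq] at this

noncomputable def sg (t : ℝ) : ℝ := min 1 (max 0 t)

lemma sg_continuous : Continuous sg :=
  continuous_const.min (continuous_const.max continuous_id)

lemma sg_nonneg (t : ℝ) : 0 ≤ sg t := le_min one_pos.le (le_max_left 0 t)

lemma sg_le_one (t : ℝ) : sg t ≤ 1 := min_le_left _ _

lemma sg_pos_imp {t : ℝ} (h : 0 < sg t) : 0 < t := by
  by_contra hc
  push_neg at hc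
  have : sg t = 0 := by unfold sg; rw [max_eq_left hc]; simp
  rw [this] at h; exact lt_irrefl 0 h

lemma sg_one : sg 1 = 1 := by unfold sg; simp

lemma sg_nonpos {t : ℝ} (h : t ≤ 0) : sg t = 0 := by
  unfold sg; rw [max_eq_left h]; simp

lemma bump [T35Space X] (D : Finset X) (U : Set X) (hU : IsOpen U) (hDU : ↑D ⊆ U) :
    ∃ φ : C(X, ℝ), (∀ x ∈ D, φ x = 1) ∧ (∀ x, x ∉ U → φ x = 0) ∧
      ∀ x, 0 ≤ φ x ∧ φ x ≤ 1 := by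
  classical
  induction D using Finset.induction_on with
  | empty => exact ⟨0, by simp, by simp, by simp⟩
  | @insert a D ha ih =>
    obtain ⟨φ₁, hφ₁D, hφ₁U, hφ₁I⟩ := ih ((Finset.coe_subset.mpr (Finset.subset_insert a D)).trans hDU)
    have haU : a ∉ Uᶜ := fun hc => hc (hDU (by simp))
    obtain ⟨f, hfc, hfa, hfK⟩ :=
      CompletelyRegularSpace.completely_regular a Uᶜ hU.isClosed_compl haU
    set φₐ : C(X, ℝ) := ⟨fun x => 1 - (f x : ℝ),
      continuous_const.sub (continuous_subtype_val.comp hfc)⟩ with hφₐ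
    refine ⟨⟨fun x => max (φ₁ x) (φₐ x), φ₁.continuous.max φₐ.continuous⟩,
      ?_, ?_, ?_⟩
    · intro x hx
      rcases Finset.mem_insert.mp hx with rfl | hx
      · have h1 : φₐ x = 1 := by simp [hφₐ, hfa]
        have h2 : φ₁ x ≤ 1 := (hφ₁I x).2
        simp only [ContinuousMap.coe_mk]
        rw [max_eq_right (h1 ▸ h2), h1]
      · have h1 : φ₁ x = 1 := hφ₁D x hx
        have h2 : φₐ x ≤ 1 := by
          simp only [hφₐ, ContinuousMap.coe_mk, sub_le_self_iff]
          exact (f x).2.1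
        simp only [ContinuousMap.coe_mk]
        rw [h1, max_eq_left h2]
    · intro x hx
      have h1 : φ₁ x = 0 := hφ₁U x hx
      have h2 : φₐ x = 0 := by
        have : f x = 1 := hfK hx
        simp [hφₐ, this]
      simp [h1, h2]
    · intro x
      constructor
      · simp only [ContinuousMap.coe_mk, le_max_iff]
        exact Or.inl (hφ₁I x).1
      · simp only [ContinuousMap.coe_mk, max_le_iff]
        refine ⟨(hφ₁I x).2, ?_⟩
        simp only [hφₐ, ContinuousMap.coe_mk, sub_le_self_iff]
        exact (f x).2.1

lemma core [T35Space X] (hAs : AscoliSpace (Cp X)) (D : ℕ → Finset X)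
    (hne : ∀ n, (D n).Nonempty) (hdisj : ∀ m n, m ≠ n → ∀ x, x ∈ D m → x ∉ D n) :
    ∃ M : Set ℕ, M.Infinite ∧ ∃ U : ℕ → Set X, (∀ n, IsOpen (U n)) ∧
      (∀ n ∈ M, ∀ x ∈ D n, x ∈ U n) ∧ ∀ x : X, {n | n ∈ M ∧ x ∈ U n}.Finite := by
  classical
  set ψ : ℕ → C(Cp X, ℝ) := fun j =>
    ⟨fun f => ∏ x ∈ D j, sg (toCM f x - j),
      continuous_finset_prod _ (fun x _ =>
        sg_continuous.comp ((continuous_ev x).sub continuous_const))⟩ with hψdef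
  set K : Set C(Cp X, ℝ) := insert 0 (Set.range ψ) with hKdef
  have hψ0 : ∀ j, ψ j (ofCM 0) = 0 := by
    intro j
    obtain ⟨x₀, hx₀⟩ := hne j
    have h0 : sg (toCM (ofCM (0 : C(X,ℝ))) x₀ - j) = 0 := by
      apply sg_nonpos
      have : toCM (ofCM (0 : C(X,ℝ))) x₀ = 0 := rfl
      rw [this]
      simp
    exact Finset.prod_eq_zero hx₀ h0
  have hnotEC : ¬ EvenlyContinuousOn (Cp X) K := by
    intro hEC
    obtain ⟨U, hUopen, hU0, W, hWopen, hW0, hprop⟩ :=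
      hEC (ofCM 0) 0 (Set.mem_insert _ _) (Metric.ball 0 1) Metric.isOpen_ball (by simp)
    obtain ⟨F, δ, hδ, hF⟩ := exists_basic hUopen hU0
    have hj : ∃ j, ∀ x ∈ D j, x ∉ F := by
      by_contra hc
      push_neg at hc
      choose w hw1 hw2 using hc
      have hwinj : Function.Injective w := by
        intro m n hmn
        by_contra hne'
        exact hdisj m n hne' (w m) (hw1 m) (hmn ▸ hw1 n)
      have h1 : (Set.range w).Finite := F.finite_toSet.subset (by
        rintro _ ⟨n, rfl⟩; exact hw2 n)
      exact (Set.infinite_range_of_injective hwinj) h1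
    obtain ⟨j, hjF⟩ := hj
    have hFc : IsClosed (↑F : Set X) := F.finite_toSet.isClosed
    obtain ⟨χ, hχD, hχU, hχI⟩ := bump (D j) (↑F : Set X)ᶜ hFc.isOpen_compl
      (fun x hx => fun hxF => hjF x hx hxF)
    set y : Cp X := ofCM (((j : ℝ) + 1) • χ) with hy
    have hyU : y ∈ U := by
      apply hF
      intro x hx
      have hχx : χ x = 0 := hχU x (by simp [hx])
      have h1 : toCM y x = 0 := by
        show (((j : ℝ) + 1) • χ) x = 0
        simp [hχx]
      have h2 : toCM (ofCM (0 : C(X,ℝ))) x = 0 := rfl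
      rw [h1, h2]
      simpa using hδ
    have hψjy : ψ j y = 1 := by
      show (∏ x ∈ D j, sg (toCM y x - j)) = 1
      apply Finset.prod_eq_one
      intro x hx
      have h1 : toCM y x = (j : ℝ) + 1 := by
        show (((j : ℝ) + 1) • χ) x = (j : ℝ) + 1
        simp [hχD x hx]
      rw [h1]
      have : (j : ℝ) + 1 - j = 1 := by ring
      rw [this, sg_one]
    have hmem : ψ j ∈ K := Set.mem_insert_iff.mpr (Or.inr ⟨j, rfl⟩)
    have hψjW : ψ j (ofCM 0) ∈ W := by
      rw [hψ0 j]
      simpa using hW0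
    have := hprop (ψ j) hmem hψjW y hyU
    rw [hψjy] at this
    simp at this
  have hKnc : ¬ IsCompact K := fun hc => hnotEC (hAs K hc)
  have hTend : ¬ Tendsto ψ atTop (𝓝 (0 : C(Cp X, ℝ))) := fun h =>
    hKnc h.isCompact_insert_range
  rw [ContinuousMap.tendsto_iff_forall_isCompact_tendstoUniformlyOn] at hTend
  push_neg at hTend
  obtain ⟨Q, hQ, hTU⟩ := hTend
  rw [Metric.tendstoUniformlyOn_iff] at hTU
  push_neg at hTU
  obtain ⟨ε, hε, hfreq⟩ := hTU
  set p : ℕ → Prop := fun n => ∃ f ∈ Q, ε ≤ dist ((0 : C(Cp X, ℝ)) f) (ψ n f) with hp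
  have hfreq' : ∃ᶠ n in atTop, p n := by
    apply hfreq.mono
    intro n hn
    exact hn
  have hMinf : {n | p n}.Infinite := Nat.frequently_atTop_iff_infinite.mp hfreq'
  have hsel : ∀ n, ∃ f : Cp X, p n → f ∈ Q ∧ ∀ x ∈ D n, (n : ℝ) < toCM f x := by
    intro n
    by_cases hn : p n
    · obtain ⟨f, hfQ, hdist⟩ := hn
      refine ⟨f, fun _ => ⟨hfQ, fun x hx => ?_⟩⟩
      have hne0 : ψ n f ≠ 0 := by
        intro h0
        rw [ContinuousMap.zero_apply, h0, dist_self] at hdist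
        linarith
      have hfac : sg (toCM f x - n) ≠ 0 := by
        have := Finset.prod_ne_zero_iff.mp hne0 x hx
        exact this
      have hpos : 0 < sg (toCM f x - n) := lt_of_le_of_ne (sg_nonneg _) (Ne.symm hfac)
      have := sg_pos_imp hpos
      linarith
    · exact ⟨ofCM 0, fun hp' => absurd hp' hn⟩
  choose fc hfc using hsel
  refine ⟨{n | p n}, hMinf,
    fun n => if h : p n then {x | (n : ℝ) < toCM (fc n) x} else ∅, fun n => ?_, ?_, ?_⟩
  · by_cases h : p n
    · simp only [dif_pos h]
      exact isOpen_lt continuous_const (toCM (fc n)).continuous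
    · simp only [dif_neg h]; exact isOpen_empty
  · intro n hn x hx
    simp only [dif_pos (show p n from hn)]
    exact (hfc n hn).2 x hx
  · intro x
    obtain ⟨B, hB⟩ := (hQ.image (continuous_ev x)).bddAbove
    apply Set.Finite.subset (Set.finite_Iio (Nat.ceil B + 1))
    intro n hn
    obtain ⟨hn1, hn2⟩ := hn
    simp only [dif_pos (show p n from hn1)] at hn2
    have h1 : toCM (fc n) x ≤ B := hB ⟨fc n, (hfc n hn1).1, rfl⟩
    have h2 : (n : ℝ) < B := lt_of_lt_of_le hn2 h1
    have : n < Nat.ceil B + 1 := by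
      have := Nat.lt_ceil.mpr h2
      omega
    exact this


lemma kprop [T35Space X] (hAs : AscoliSpace (Cp X)) (D : ℕ → Finset X)
    (hdisj : ∀ m n, m ≠ n → ∀ x, x ∈ D m → x ∉ D n) :
    ∃ M : Set ℕ, M.Infinite ∧ ∃ U : ℕ → Set X, (∀ n, IsOpen (U n)) ∧
      (∀ n ∈ M, ∀ x ∈ D n, x ∈ U n) ∧ ∀ x : X, {n | n ∈ M ∧ x ∈ U n}.Finite := by
  classical
  by_cases hinf : {n | D n = ∅}.Infinite
  · refine ⟨{n | D n = ∅}, hinf, fun _ => ∅, fun _ => isOpen_empty, ?_, ?_⟩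
    · intro n hn x hx
      rw [Set.mem_setOf_eq.mp hn] at hx
      simp at hx
    · intro x
      convert Set.finite_empty
      ext n
      simp
  · have hfin : {n | D n = ∅}.Finite := Set.not_infinite.mp hinf
    obtain ⟨N₀, hN₀⟩ : ∃ N₀ : ℕ, ∀ n, N₀ ≤ n → (D n).Nonempty := by
      obtain ⟨B, hB⟩ := hfin.bddAbove
      refine ⟨B + 1, fun n hn => Finset.nonempty_iff_ne_empty.mpr (fun h => ?_)⟩
      have : n ≤ B := hB h
      omega
    set D' : ℕ → Finset X := fun j => D (N₀ + j) with hD'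
    have hne' : ∀ j, (D' j).Nonempty := fun j => hN₀ _ (Nat.le_add_right _ _)
    have hdisj' : ∀ m n, m ≠ n → ∀ x, x ∈ D' m → x ∉ D' n := fun m n hmn x hx =>
      hdisj _ _ (fun h => hmn (Nat.add_left_cancel h)) x hx
    obtain ⟨M₁, hM₁, U₁, hU₁o, hU₁e, hU₁f⟩ := core hAs D' hne' hdisj'
    refine ⟨(fun j => N₀ + j) '' M₁,
      hM₁.image (Set.injOn_of_injective (fun a b h => Nat.add_left_cancel h)),
      fun n => U₁ (n - N₀), fun n => hU₁o _, ?_, ?_⟩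
    · rintro n ⟨j, hj, rfl⟩ x hx
      have hj' : N₀ + j - N₀ = j := by omega
      show x ∈ U₁ (N₀ + j - N₀)
      rw [hj']
      exact hU₁e j hj x hx
    · intro x
      apply Set.Finite.subset ((hU₁f x).image (fun j => N₀ + j))
      rintro n ⟨⟨j, hj, rfl⟩, hxU⟩
      have hxU' : x ∈ U₁ (N₀ + j - N₀) := hxU
      have hj' : N₀ + j - N₀ = j := by omega
      rw [hj'] at hxU'
      exact ⟨j, ⟨hj, hxU'⟩, rfl⟩


lemma ascoli_to_kfu [T35Space X] (hAs : AscoliSpace (Cp X)) :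
    KappaFrechetUrysohn (Cp X) := by
  classical
  intro A hA z₀ hz₀
  -- choose approximating functions
  have hstep : ∀ (P : Finset X) (n : ℕ), ∃ g : Cp X, g ∈ A ∧
      ∀ x ∈ P, |toCM g x - toCM z₀ x| < 1 / (n + 1) := by
    intro P n
    have hpos : (0 : ℝ) < 1 / (n + 1) := by positivity
    obtain ⟨g, hgA, hgP⟩ := closure_basic hz₀ P hpos
    exact ⟨g, hgA, hgP⟩
  choose gF hgFA hgFP using hstep
  have hnbhd : ∀ (P : Finset X) (n : ℕ), ∃ (E : Finset X) (δ : ℝ), 0 < δ ∧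
      ∀ h : Cp X, (∀ x ∈ E, |toCM h x - toCM (gF P n) x| < δ) → h ∈ A :=
    fun P n => exists_basic hA (hgFA P n)
  choose EF dF hdF hEF using hnbhd
  -- the recursion
  set Prec : ℕ → Finset X := fun n => Nat.rec ∅ (fun k Pk => Pk ∪ EF Pk k) n with hPrec
  have hPsucc : ∀ n, Prec (n + 1) = Prec n ∪ EF (Prec n) n := fun n => rfl
  set g : ℕ → Cp X := fun n => gF (Prec n) n with hg
  set E : ℕ → Finset X := fun n => EF (Prec n) n with hE
  have hPmono : ∀ m n, m ≤ n → Prec m ⊆ Prec n := by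
    intro m n hmn
    induction n with
    | zero => have : m = 0 := by omega
              rw [this]
    | succ k ih =>
      rcases Nat.lt_or_ge m (k+1) with h | h
      · have := ih (by omega)
        rw [hPsucc k]
        exact this.trans Finset.subset_union_left
      · have : m = k + 1 := by omega
        rw [this]
  have hEsub : ∀ m n, m < n → E m ⊆ Prec n := by
    intro m n hmn
    have h1 : E m ⊆ Prec (m + 1) := by
      rw [hPsucc m]; exact Finset.subset_union_right
    exact h1.trans (hPmono (m+1) n (by omega))
  set Dn : ℕ → Finset X := fun n => E n \ Prec n with hDn
  have hdisj : ∀ m n, m ≠ n → ∀ x, x ∈ Dn m → x ∉ Dn n := by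
    intro m n hmn x hxm hxn
    rcases Nat.lt_or_ge m n with h | h
    · have h1 : x ∈ Prec n := hEsub m n h (Finset.mem_sdiff.mp hxm).1
      exact (Finset.mem_sdiff.mp hxn).2 h1
    · have h' : n < m := by omega
      have h1 : x ∈ Prec m := hEsub n m h' (Finset.mem_sdiff.mp hxn).1
      exact (Finset.mem_sdiff.mp hxm).2 h1
  obtain ⟨M, hM, U, hUo, hUe, hUf⟩ := kprop hAs Dn hdisj
  -- bump α for Dn inside U n (usable when n ∈ M)
  have halpha : ∀ n, ∃ α : C(X,ℝ), ((↑(Dn n) : Set X) ⊆ U n → ∀ x ∈ Dn n, α x = 1) ∧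
      (∀ x, x ∉ U n → α x = 0) ∧ (∀ x, 0 ≤ α x ∧ α x ≤ 1) := by
    intro n
    by_cases hsub : (↑(Dn n) : Set X) ⊆ U n
    · obtain ⟨φ, h1, h2, h3⟩ := bump (Dn n) (U n) (hUo n) hsub
      exact ⟨φ, fun _ => h1, h2, h3⟩
    · exact ⟨0, fun hh => absurd hh hsub, by simp, by simp⟩
  choose α hα1 hα2 hα3 using halpha
  -- bump β for E n ∩ Prec n inside O n
  set O : ℕ → Set X := fun n => {x | |toCM (g n) x - toCM z₀ x| < 1 / (n + 1)} with hO
  have hOopen : ∀ n, IsOpen (O n) := by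
    intro n
    have hc : Continuous fun x => |toCM (g n) x - toCM z₀ x| :=
      ((toCM (g n)).continuous.sub (toCM z₀).continuous).abs
    exact isOpen_lt hc continuous_const
  have hbeta : ∀ n, ∃ β : C(X,ℝ), (∀ x ∈ E n ∩ Prec n, β x = 1) ∧
      (∀ x, x ∉ O n → β x = 0) ∧ (∀ x, 0 ≤ β x ∧ β x ≤ 1) := by
    intro n
    apply bump (E n ∩ Prec n) (O n) (hOopen n)
    intro x hx
    have hxP : x ∈ Prec n := (Finset.mem_inter.mp hx).2
    exact hgFP (Prec n) n x hxP
  choose β hβ1 hβ2 hβ3 using hbeta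
  set φ : ℕ → C(X,ℝ) := fun n =>
    ⟨fun x => max (α n x) (β n x), (α n).continuous.max (β n).continuous⟩ with hφ
  set h : ℕ → Cp X := fun n => ofCM (toCM z₀ + (toCM (g n) - toCM z₀) * φ n) with hh
  have happ : ∀ n x, toCM (h n) x = toCM z₀ x + (toCM (g n) x - toCM z₀ x) * φ n x := by
    intro n x
    show (toCM z₀ + (toCM (g n) - toCM z₀) * φ n) x = _
    simp
  have hhA : ∀ n ∈ M, h n ∈ A := by
    intro n hn
    apply hEF (Prec n) n
    intro x hx
    have hφ1 : φ n x = 1 := by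
      have hαle : α n x ≤ 1 := (hα3 n x).2
      have hβle : β n x ≤ 1 := (hβ3 n x).2
      by_cases hxP : x ∈ Prec n
      · have hβx : β n x = 1 := hβ1 n x (Finset.mem_inter.mpr ⟨hx, hxP⟩)
        show max (α n x) (β n x) = 1
        rw [hβx, max_eq_right hαle]
      · have hxD : x ∈ Dn n := Finset.mem_sdiff.mpr ⟨hx, hxP⟩
        have hsub : (↑(Dn n) : Set X) ⊆ U n := fun y hy => hUe n hn y hy
        have hαx : α n x = 1 := hα1 n hsub x hxD
        show max (α n x) (β n x) = 1
        rw [hαx, max_eq_left hβle]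
    rw [happ n x, hφ1]
    have : toCM z₀ x + (toCM (g n) x - toCM z₀ x) * 1 - toCM (g n) x = 0 := by ring
    rw [this]
    simpa using hdF (Prec n) n
  have hbound : ∀ n x, x ∉ U n → |toCM (h n) x - toCM z₀ x| ≤ 1 / (n + 1) := by
    intro n x hxU
    have hαx : α n x = 0 := hα2 n x hxU
    have hφx : φ n x = β n x := by
      show max (α n x) (β n x) = β n x
      rw [hαx, max_eq_right (hβ3 n x).1]
    rw [happ n x]
    have heq : toCM z₀ x + (toCM (g n) x - toCM z₀ x) * φ n x - toCM z₀ x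
        = (toCM (g n) x - toCM z₀ x) * φ n x := by ring
    rw [heq, hφx]
    by_cases hxO : x ∈ O n
    · have h1 : |toCM (g n) x - toCM z₀ x| < 1 / (n + 1) := hxO
      rw [abs_mul]
      calc |toCM (g n) x - toCM z₀ x| * |β n x|
          ≤ |toCM (g n) x - toCM z₀ x| * 1 := by
            apply mul_le_mul_of_nonneg_left _ (abs_nonneg _)
            rw [abs_of_nonneg (hβ3 n x).1]
            exact (hβ3 n x).2
        _ ≤ 1 / (n + 1) := by rw [mul_one]; exact h1.le
    · have hβx : β n x = 0 := hβ2 n x hxO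
      rw [hβx, mul_zero, abs_zero]
      positivity
  -- enumerate M and conclude
  set e : ℕ → ℕ := Nat.nth (· ∈ M) with he
  have hMset : {n | (fun n => n ∈ M) n}.Infinite := hM
  have he_mem : ∀ k, e k ∈ M := fun k => Nat.nth_mem_of_infinite hMset k
  have he_mono : StrictMono e := Nat.nth_strictMono hMset
  refine ⟨fun k => h (e k), fun k => hhA _ (he_mem k), ?_⟩
  have key : Tendsto (fun k => (toCM (h (e k)) : X → ℝ)) atTop (𝓝 (toCM z₀ : X → ℝ)) := by
    rw [tendsto_pi_nhds]
    intro x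
    rw [tendsto_iff_dist_tendsto_zero]
    apply squeeze_zero' (Filter.Eventually.of_forall fun k => dist_nonneg)
      (g := fun k : ℕ => 1 / ((k : ℝ) + 1))
    · -- eventually the bound holds
      have hfin2 : (e ⁻¹' {n | n ∈ M ∧ x ∈ U n}).Finite :=
        (hUf x).preimage (Set.injOn_of_injective he_mono.injective)
      obtain ⟨b, hb⟩ := hfin2.bddAbove
      filter_upwards [Filter.eventually_gt_atTop b] with k hk
      have hxe : x ∉ U (e k) := by
        intro hxU
        have hmem : k ∈ e ⁻¹' {n | n ∈ M ∧ x ∈ U n} := ⟨he_mem k, hxU⟩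
        have := hb hmem
        omega
      have h1 : dist (toCM (h (e k)) x) (toCM z₀ x) ≤ 1 / (e k + 1) := by
        rw [Real.dist_eq]
        exact hbound (e k) x hxe
      have h2 : (1 : ℝ) / (e k + 1) ≤ 1 / (k + 1) := by
        apply one_div_le_one_div_of_le (by positivity)
        have hke : k ≤ e k := he_mono.le_apply
        have : (k : ℝ) ≤ e k := Nat.cast_le.mpr hke
        linarith
      exact h1.trans h2
    · exact tendsto_one_div_add_atTop_nhds_zero_nat
  have hind : IsInducing (fun f : Cp X => (toCM f : X → ℝ)) := IsInducing.induced _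
  rw [hind.tendsto_nhds_iff]
  exact key


lemma kfu_to_ascoli {Z : Type*} [TopologicalSpace Z] (hk : KappaFrechetUrysohn Z) :
    AscoliSpace Z := by
  intro K hK x₀ f₀ hf₀ V hV hfV
  by_contra hc
  push_neg at hc
  set c := f₀ x₀ with hcdef
  obtain ⟨ε, hε, hball⟩ := Metric.isOpen_iff.mp hV c hfV
  set A : Set Z :=
    ⋃ (g : C(Z,ℝ)) (_ : g ∈ K ∧ dist (g x₀) c < ε/4), {z | ε/2 < dist (g z) c} with hA
  have hAopen : IsOpen A := by
    apply isOpen_iUnion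
    intro g
    apply isOpen_iUnion
    intro _
    exact isOpen_lt continuous_const (g.continuous.dist continuous_const)
  have hx₀A : x₀ ∈ closure A := by
    rw [_root_.mem_closure_iff]
    intro o ho hxo
    obtain ⟨g, hgK, hgW, y, hyU, hgy⟩ := hc o ho hxo (Metric.ball c (ε/4))
      Metric.isOpen_ball (by rw [Metric.mem_ball, dist_self]; positivity)
    refine ⟨y, hyU, ?_⟩
    rw [hA]
    apply Set.mem_iUnion.mpr
    refine ⟨g, Set.mem_iUnion.mpr ⟨⟨hgK, by rwa [Metric.mem_ball] at hgW⟩, ?_⟩⟩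
    show ε/2 < dist (g y) c
    have hge : ε ≤ dist (g y) c := by
      by_contra hlt
      push_neg at hlt
      exact hgy (hball (by rwa [Metric.mem_ball]))
    linarith
  obtain ⟨u, huA, hu⟩ := hk A hAopen x₀ hx₀A
  have hsel : ∀ n, ∃ g : C(Z,ℝ), g ∈ K ∧ dist (g x₀) c < ε/4 ∧ ε/2 < dist (g (u n)) c := by
    intro n
    have hn := huA n
    rw [hA] at hn
    obtain ⟨g, hg⟩ := Set.mem_iUnion.mp hn
    obtain ⟨⟨hgK, hgx⟩, hgz⟩ := Set.mem_iUnion.mp hg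
    exact ⟨g, hgK, hgx, hgz⟩
  choose gs hgsK hgsx hgsu using hsel
  have hle : Filter.map gs Filter.atTop ≤ Filter.principal K := by
    rw [Filter.le_principal_iff, Filter.mem_map]
    exact Filter.Eventually.of_forall fun n => hgsK n
  obtain ⟨G, hGK, hGcl⟩ := hK.exists_clusterPt hle
  set S : Set Z := insert x₀ (Set.range u) with hS
  have hScpt : IsCompact S := hu.isCompact_insert_range
  haveI : CompactSpace S := isCompact_iff_compactSpace.mp hScpt
  have hres : Continuous (fun f : C(Z,ℝ) => f.restrict S) :=
    ContinuousMap.continuous_restrict S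
  have hGcl' : ClusterPt (G.restrict S)
      (Filter.map (fun n => (gs n).restrict S) Filter.atTop) := by
    have h1 := hGcl.map hres.continuousAt Filter.tendsto_map
    rwa [Filter.map_map] at h1
  set δ : ℝ := ε/16 with hδdef
  have hδ : 0 < δ := by positivity
  obtain ⟨U₀, hU₀sub, hU₀o, hxU₀⟩ :
      ∃ U₀ ⊆ G ⁻¹' Metric.ball (G x₀) δ, IsOpen U₀ ∧ x₀ ∈ U₀ := by
    have hmem : G ⁻¹' Metric.ball (G x₀) δ ∈ nhds x₀ :=
      G.continuous.continuousAt (Metric.ball_mem_nhds _ hδ)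
    exact mem_nhds_iff.mp hmem
  have hev : ∀ᶠ n in Filter.atTop, u n ∈ U₀ := hu (hU₀o.mem_nhds hxU₀)
  obtain ⟨N, hN⟩ := Filter.eventually_atTop.mp hev
  have hmcp : ∃ n, N ≤ n ∧ dist ((gs n).restrict S) (G.restrict S) < δ := by
    have hfreq : ∃ᶠ n in Filter.atTop,
        (fun m => (gs m).restrict S) n ∈ Metric.ball (G.restrict S) δ := by
      have hfb := ((Metric.nhds_basis_ball).clusterPt_iff_frequently.mp hGcl') δ hδ
      rwa [Filter.frequently_map] at hfb
    obtain ⟨n, hn1, hn2⟩ := (hfreq.and_eventually (Filter.eventually_ge_atTop N)).exists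
    exact ⟨n, hn2, by rwa [Metric.mem_ball] at hn1⟩
  obtain ⟨n, hnN, hdist⟩ := hmcp
  have hxS : x₀ ∈ S := Set.mem_insert _ _
  have huS : u n ∈ S := Set.mem_insert_of_mem _ ⟨n, rfl⟩
  have d1 : dist (gs n (u n)) (G (u n)) ≤ dist ((gs n).restrict S) (G.restrict S) := by
    have h := ContinuousMap.dist_apply_le_dist
      (f := (gs n).restrict S) (g := G.restrict S) (⟨u n, huS⟩ : S)
    simpa [ContinuousMap.restrict_apply] using h
  have d2 : dist (gs n x₀) (G x₀) ≤ dist ((gs n).restrict S) (G.restrict S) := by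
    have h := ContinuousMap.dist_apply_le_dist
      (f := (gs n).restrict S) (g := G.restrict S) (⟨x₀, hxS⟩ : S)
    simpa [ContinuousMap.restrict_apply] using h
  have d3 : dist (G (u n)) (G x₀) < δ := by
    have := hU₀sub (hN n hnN)
    rwa [Set.mem_preimage, Metric.mem_ball] at this
  have main : ε/2 < dist (gs n (u n)) c := hgsu n
  have tri1 : dist (gs n (u n)) (gs n x₀) ≤
      dist (gs n (u n)) (G (u n)) + dist (G (u n)) (G x₀) + dist (G x₀) (gs n x₀) :=
    dist_triangle4 _ _ _ _
  have tri2 : dist (gs n (u n)) c ≤ dist (gs n (u n)) (gs n x₀) + dist (gs n x₀) c :=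
    dist_triangle _ _ _
  have hd2' : dist (G x₀) (gs n x₀) ≤ dist ((gs n).restrict S) (G.restrict S) := by
    rwa [dist_comm]
  have hx4 : dist (gs n x₀) c < ε/4 := hgsx n
  have hδval : δ = ε/16 := hδdef
  linarith [lt_of_le_of_lt d1 hdist, lt_of_le_of_lt hd2' hdist]

end CpAux


/-- For a cosmic Tychonoff space `X`, `C_p(X)` is Ascoli iff it is κ-Fréchet–Urysohn. -/
theorem ascoli_Cp_iff_kappaFrechetUrysohn_of_cosmic (X : Type*) [TopologicalSpace X]
    [T35Space X] (hX : Cosmic X) :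
    AscoliSpace (Cp X) ↔ KappaFrechetUrysohn (Cp X) := by
  constructor
  · exact fun h => CpAux.ascoli_to_kfu h
  · exact fun h => CpAux.kfu_to_ascoli h
end

section
/- Let X be a Čech-complete space. If C_p(X) is an Ascoli space, then X is scattered. -/
/-- A space is Čech-complete if it is Tychonoff and is a countable intersection of open
sets in some (equivalently, any) compactification. -/
def CechComplete (X : Type u) [TopologicalSpace X] : Prop :=
  CompletelyRegularSpace X ∧ T2Space X ∧
    ∃ (K : Type u) (tK : TopologicalSpace K) (e : X → K),
      @CompactSpace K tK ∧ @T2Space K tK ∧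
      @Topology.IsEmbedding X K _ tK e ∧ @Dense K tK (Set.range e) ∧
      ∃ G : ℕ → Set K, (∀ n, @IsOpen K tK (G n)) ∧ (⋂ n, G n) = Set.range e

/-- A space is scattered if every nonempty subset has a point isolated in it. -/
def Scattered (X : Type*) [TopologicalSpace X] : Prop :=
  ∀ A : Set X, A.Nonempty → ∃ a ∈ A, ∃ U : Set X, IsOpen U ∧ U ∩ A = {a}


open Set Topology Filter

namespace CechAscoliAux


variable {K : Type*} [TopologicalSpace K] [CompactSpace K] [T2Space K]

/-- Step: split an open set meeting `S` into two smaller opens with disjoint closures,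
    both inside `Ω ∩ G n`, both meeting `S`. -/
lemma step_exists {S : Set K} (G : ℕ → Set K) (hGo : ∀ n, IsOpen (G n)) (hSG : ∀ n, S ⊆ G n)
    (hSni : ∀ z ∈ S, ∀ Ω : Set K, IsOpen Ω → z ∈ Ω → ∃ z' ∈ S ∩ Ω, z' ≠ z)
    {Ω : Set K} (hΩ : IsOpen Ω) (hne : (Ω ∩ S).Nonempty) (n : ℕ) :
    ∃ q : Set K × Set K,
      (IsOpen q.1 ∧ (q.1 ∩ S).Nonempty) ∧ (IsOpen q.2 ∧ (q.2 ∩ S).Nonempty) ∧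
      closure q.1 ⊆ Ω ∩ G n ∧ closure q.2 ⊆ Ω ∩ G n ∧
      Disjoint (closure q.1) (closure q.2) := by
  obtain ⟨z₁, hz₁Ω, hz₁S⟩ := hne
  have hΩ' : IsOpen (Ω ∩ G n) := hΩ.inter (hGo n)
  have hz₁Ω' : z₁ ∈ Ω ∩ G n := ⟨hz₁Ω, hSG n hz₁S⟩
  obtain ⟨z₂, ⟨hz₂S, hz₂Ω'⟩, hz₂ne⟩ := hSni z₁ hz₁S (Ω ∩ G n) hΩ' hz₁Ω'
  obtain ⟨V₂, V₁, hV₂o, hV₁o, hz₂V, hz₁V, hVdisj⟩ := t2_separation hz₂ne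
  -- closed neighborhoods inside V_i ∩ Ω ∩ G n
  have h₁ : V₁ ∩ (Ω ∩ G n) ∈ 𝓝 z₁ := (hV₁o.inter hΩ').mem_nhds ⟨hz₁V, hz₁Ω'⟩
  have h₂ : V₂ ∩ (Ω ∩ G n) ∈ 𝓝 z₂ := (hV₂o.inter hΩ').mem_nhds ⟨hz₂V, hz₂Ω'⟩
  obtain ⟨t₁, ht₁n, ht₁c, ht₁sub⟩ := exists_mem_nhds_isClosed_subset h₁
  obtain ⟨t₂, ht₂n, ht₂c, ht₂sub⟩ := exists_mem_nhds_isClosed_subset h₂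
  refine ⟨(interior t₁, interior t₂), ⟨isOpen_interior, ⟨z₁, mem_interior_iff_mem_nhds.2 ht₁n, hz₁S⟩⟩,
    ⟨isOpen_interior, ⟨z₂, mem_interior_iff_mem_nhds.2 ht₂n, hz₂S⟩⟩, ?_, ?_, ?_⟩
  · exact (closure_minimal interior_subset ht₁c).trans (ht₁sub.trans inter_subset_right)
  · exact (closure_minimal interior_subset ht₂c).trans (ht₂sub.trans inter_subset_right)
  · refine Disjoint.mono ?_ ?_ hVdisj.symm
    · exact (closure_minimal interior_subset ht₁c).trans (ht₁sub.trans inter_subset_left)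
    · exact (closure_minimal interior_subset ht₂c).trans (ht₂sub.trans inter_subset_left)

variable (S : Set K) (G : ℕ → Set K)

/-- Bundled hypotheses for the Cantor scheme construction. -/
structure SchemeHyp : Prop where
  hGo : ∀ n, IsOpen (G n)
  hSne : S.Nonempty
  hSG : ∀ n, S ⊆ G n
  hSni : ∀ z ∈ S, ∀ Ω : Set K, IsOpen Ω → z ∈ Ω → ∃ z' ∈ S ∩ Ω, z' ≠ z

variable {S G}

/-- The choice version of `step_exists`. -/
noncomputable def step (h : SchemeHyp S G) (Ω : {Ω : Set K // IsOpen Ω ∧ (Ω ∩ S).Nonempty})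
    (n : ℕ) :
    {q : Set K × Set K //
      (IsOpen q.1 ∧ (q.1 ∩ S).Nonempty) ∧ (IsOpen q.2 ∧ (q.2 ∩ S).Nonempty) ∧
      closure q.1 ⊆ Ω.1 ∩ G n ∧ closure q.2 ⊆ Ω.1 ∩ G n ∧
      Disjoint (closure q.1) (closure q.2)} :=
  ⟨_, (step_exists G h.hGo h.hSG h.hSni Ω.2.1 Ω.2.2 n).choose_spec⟩

/-- The open sets of the Cantor scheme, indexed by lists of booleans (head = newest bit). -/
noncomputable def nodes (h : SchemeHyp S G) : List Bool → {Ω : Set K // IsOpen Ω ∧ (Ω ∩ S).Nonempty}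
  | [] => ⟨Set.univ, isOpen_univ, by simpa using h.hSne⟩
  | true :: σ => ⟨(step h (nodes h σ) σ.length).1.2, (step h (nodes h σ) σ.length).2.2.1⟩
  | false :: σ => ⟨(step h (nodes h σ) σ.length).1.1, (step h (nodes h σ) σ.length).2.1⟩

/-- The closed sets of the Cantor scheme. -/
noncomputable def Kn (h : SchemeHyp S G) (σ : List Bool) : Set K := closure (nodes h σ).1

lemma Kn_isClosed (h : SchemeHyp S G) (σ : List Bool) : IsClosed (Kn h σ) := isClosed_closure

lemma Kn_nonempty (h : SchemeHyp S G) (σ : List Bool) : (Kn h σ).Nonempty :=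
  ((nodes h σ).2.2.mono inter_subset_left).mono subset_closure

lemma Kn_cons_subset (h : SchemeHyp S G) (b : Bool) (σ : List Bool) :
    Kn h (b :: σ) ⊆ (nodes h σ).1 ∩ G σ.length := by
  cases b
  · exact (step h (nodes h σ) σ.length).2.2.2.1
  · exact (step h (nodes h σ) σ.length).2.2.2.2.1

lemma Kn_cons_subset_parent (h : SchemeHyp S G) (b : Bool) (σ : List Bool) :
    Kn h (b :: σ) ⊆ Kn h σ :=
  (Kn_cons_subset h b σ).trans (inter_subset_left.trans subset_closure)

lemma Kn_cons_disjoint (h : SchemeHyp S G) (σ : List Bool) :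
    Disjoint (Kn h (true :: σ)) (Kn h (false :: σ)) :=
  ((step h (nodes h σ) σ.length).2.2.2.2.2).symm

lemma Kn_append_subset (h : SchemeHyp S G) (w σ : List Bool) :
    Kn h (w ++ σ) ⊆ Kn h σ := by
  induction w with
  | nil => simp
  | cons b w ih => exact (Kn_cons_subset_parent h b (w ++ σ)).trans ih

lemma Kn_disjoint_of_ne (h : SchemeHyp S G) :
    ∀ σ τ : List Bool, σ.length = τ.length → σ ≠ τ → Disjoint (Kn h σ) (Kn h τ) := by
  intro σ
  induction σ with
  | nil => intro τ hlen hne; cases τ <;> simp_all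
  | cons b σ' ih =>
    intro τ hlen hne
    match τ with
    | [] => simp at hlen
    | c :: τ' =>
      by_cases hστ : σ' = τ'
      · subst hστ
        have hbc : b ≠ c := by rintro rfl; exact hne rfl
        cases b <;> cases c <;> simp_all
        · exact (Kn_cons_disjoint h σ').symm
        · exact Kn_cons_disjoint h σ'
      · have hl : σ'.length = τ'.length := by simpa using hlen
        exact (ih τ' hl hστ).mono (Kn_cons_subset_parent h b σ') (Kn_cons_subset_parent h c τ')


/-- Level sets of the scheme. -/
noncomputable def levelSet (h : SchemeHyp S G) (n : ℕ) : Set K :=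
  ⋃ w : Fin n → Bool, Kn h (List.ofFn w)

lemma levelSet_isClosed (h : SchemeHyp S G) (n : ℕ) : IsClosed (levelSet h n) :=
  isClosed_iUnion_of_finite fun _ => Kn_isClosed h _

lemma exists_ofFn {k : ℕ} (l : List Bool) (hl : l.length = k) :
    ∃ w : Fin k → Bool, List.ofFn w = l := by
  subst hl
  exact ⟨l.get, List.ofFn_get l⟩

lemma mem_levelSet_of (h : SchemeHyp S G) {σ : List Bool} {n : ℕ} (hσ : σ.length = n) {x : K}
    (hx : x ∈ Kn h σ) : x ∈ levelSet h n := by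
  obtain ⟨w, hw⟩ := exists_ofFn σ hσ
  exact mem_iUnion.2 ⟨w, hw ▸ hx⟩

lemma levelSet_antitone (h : SchemeHyp S G) : Antitone (levelSet h) := by
  refine antitone_nat_of_succ_le fun n => ?_
  intro x hx
  obtain ⟨w, hw⟩ := mem_iUnion.1 hx
  rw [List.ofFn_succ] at hw
  exact mem_levelSet_of h (by simp) (Kn_cons_subset_parent h (w 0) _ hw)

/-- The compact set at the bottom of the scheme. -/
noncomputable def Cs (h : SchemeHyp S G) : Set K := ⋂ n, levelSet h n

lemma Cs_isClosed (h : SchemeHyp S G) : IsClosed (Cs h) :=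
  isClosed_iInter fun n => levelSet_isClosed h n

lemma Cs_subset_G (h : SchemeHyp S G) (n : ℕ) : Cs h ⊆ G n := by
  intro x hx
  have hx' : x ∈ levelSet h (n + 1) := mem_iInter.1 hx (n + 1)
  obtain ⟨w, hw⟩ := mem_iUnion.1 hx'
  rw [List.ofFn_succ] at hw
  have := Kn_cons_subset h (w 0) (List.ofFn fun i => w i.succ) hw
  simpa using this.2

lemma Cs_inter_Kn_nonempty (h : SchemeHyp S G) (σ : List Bool) :
    (Cs h ∩ Kn h σ).Nonempty := by
  set t : ℕ → Set K := fun m => Kn h (List.replicate m false ++ σ) with ht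
  have hmono : ∀ m, t (m + 1) ⊆ t m := by
    intro m
    have : List.replicate (m + 1) false ++ σ = false :: (List.replicate m false ++ σ) := by
      simp [List.replicate_succ]
    rw [ht]; dsimp only; rw [this]
    exact Kn_cons_subset_parent h false _
  have hanti : Antitone t := antitone_nat_of_succ_le hmono
  have hne : (⋂ m, t m).Nonempty := by
    refine IsCompact.nonempty_iInter_of_directed_nonempty_isCompact_isClosed t
      (hanti.directed_ge) (fun m => Kn_nonempty h _) (fun m => (Kn_isClosed h _).isCompact)
      (fun m => Kn_isClosed h _)
  obtain ⟨x, hx⟩ := hne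
  have hxt : ∀ m, x ∈ t m := fun m => mem_iInter.1 hx m
  refine ⟨x, ?_, by simpa [ht] using hxt 0⟩
  refine mem_iInter.2 fun n => ?_
  have : x ∈ levelSet h (n + σ.length) :=
    mem_levelSet_of h (by simp) (hxt n)
  exact levelSet_antitone h (Nat.le_add_right _ _) this

/-- A closed set hitting every node of the scheme. -/
def Full (h : SchemeHyp S G) (D : Set K) : Prop := ∀ σ : List Bool, (D ∩ Kn h σ).Nonempty

lemma exists_minimal_full (h : SchemeHyp S G) :
    ∃ C₀ : Set K, C₀ ⊆ Cs h ∧ IsClosed C₀ ∧ Full h C₀ ∧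
      ∀ D ⊆ C₀, IsClosed D → Full h D → D = C₀ := by
  set 𝔖 : Set (Set K) := {D | D ⊆ Cs h ∧ IsClosed D ∧ Full h D} with h𝔖
  have hCs : Cs h ∈ 𝔖 := ⟨subset_rfl, Cs_isClosed h, fun σ => Cs_inter_Kn_nonempty h σ⟩
  have hchain : ∀ c ⊆ 𝔖, IsChain (· ⊆ ·) c → c.Nonempty → ∃ lb ∈ 𝔖, ∀ s ∈ c, lb ⊆ s := by
    intro c hc hchain hcne
    haveI : Nonempty c := hcne.to_subtype
    refine ⟨⋂₀ c, ⟨?_, ?_, ?_⟩, fun s hs => sInter_subset_of_mem hs⟩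
    · obtain ⟨D, hD⟩ := hcne
      exact (sInter_subset_of_mem hD).trans (hc hD).1
    · exact isClosed_sInter fun D hD => (hc hD).2.1
    · intro σ
      have hdir : Directed (· ⊇ ·) (fun D : c => D.1 ∩ Kn h σ) := by
        intro D D'
        rcases eq_or_ne D.1 D'.1 with heq | hne
        · exact ⟨D, subset_rfl, inter_subset_inter_left _ heq.le⟩
        · rcases hchain D.2 D'.2 hne with hle | hle
          · exact ⟨D, subset_rfl, inter_subset_inter_left _ hle⟩
          · exact ⟨D', inter_subset_inter_left _ hle, subset_rfl⟩
      have hne : (⋂ D : c, (D.1 ∩ Kn h σ)).Nonempty := by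
        refine IsCompact.nonempty_iInter_of_directed_nonempty_isCompact_isClosed _ hdir
          (fun D => (hc D.2).2.2 σ)
          (fun D => (((hc D.2).2.1).inter (Kn_isClosed h σ)).isCompact)
          (fun D => ((hc D.2).2.1).inter (Kn_isClosed h σ))
      rwa [sInter_eq_iInter, iInter_inter]
  obtain ⟨m, hmsub, hmin⟩ := zorn_superset_nonempty 𝔖 hchain (Cs h) hCs
  exact ⟨m, hmin.1.1, hmin.1.2.1, hmin.1.2.2,
    fun D hD hDc hDf => subset_antisymm hD (hmin.2 ⟨hD.trans hmin.1.1, hDc, hDf⟩ hD)⟩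


section Minimal

variable {C₀ : Set K}

/-- Irreducibility: every open set meeting a minimal full set contains a full trace. -/
lemma trace_subset_of_isOpen (h : SchemeHyp S G) (hC₀c : IsClosed C₀) (hC₀f : Full h C₀)
    (hC₀min : ∀ D ⊆ C₀, IsClosed D → Full h D → D = C₀)
    {Ω : Set K} (hΩ : IsOpen Ω) (hne : (Ω ∩ C₀).Nonempty) :
    ∃ σ : List Bool, C₀ ∩ Kn h σ ⊆ Ω := by
  by_contra hcon
  push_neg at hcon
  have hfull : Full h (C₀ \ Ω) := by
    intro σ
    obtain ⟨x, hx, hxn⟩ := Set.not_subset.1 (hcon σ)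
    exact ⟨x, ⟨hx.1, hxn⟩, hx.2⟩
  have heq := hC₀min (C₀ \ Ω) diff_subset (hC₀c.sdiff hΩ) hfull
  obtain ⟨z, hzΩ, hzC⟩ := hne
  have hz2 : z ∈ C₀ \ Ω := by rw [heq]; exact hzC
  exact hz2.2 hzΩ

/-- Traces of a full set on nodes are infinite. -/
lemma trace_infinite (h : SchemeHyp S G) (hC₀f : Full h C₀) (σ : List Bool) :
    (C₀ ∩ Kn h σ).Infinite := by
  intro hfin
  set m := hfin.toFinset.card + 1 with hm
  have hψ : ∀ w : Fin m → Bool, ∃ x, x ∈ C₀ ∩ Kn h (List.ofFn w ++ σ) :=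
    fun w => hC₀f (List.ofFn w ++ σ)
  choose ψ hψmem using hψ
  have hψF : ∀ w, ψ w ∈ hfin.toFinset := by
    intro w
    rw [Set.Finite.mem_toFinset]
    exact ⟨(hψmem w).1, Kn_append_subset h _ _ (hψmem w).2⟩
  have hinj : Function.Injective fun w : Fin m → Bool => (⟨ψ w, hψF w⟩ : hfin.toFinset) := by
    intro w w' hww
    by_contra hne
    have hlne : List.ofFn w ++ σ ≠ List.ofFn w' ++ σ := by
      intro heq
      exact hne (List.ofFn_inj.1 (by simpa using List.append_inj_left' heq (by simp)))
    have hdisj := Kn_disjoint_of_ne h (List.ofFn w ++ σ) (List.ofFn w' ++ σ) (by simp) hlne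
    have h1 : ψ w ∈ Kn h (List.ofFn w ++ σ) := (hψmem w).2
    have h2 : ψ w ∈ Kn h (List.ofFn w' ++ σ) := by
      have : ψ w = ψ w' := congrArg Subtype.val hww
      rw [this]; exact (hψmem w').2
    exact (hdisj.ne_of_mem h1 h2) rfl
  have hcard := Fintype.card_le_of_injective _ hinj
  rw [Fintype.card_coe] at hcard
  have h2m : hfin.toFinset.card < 2 ^ m := by
    calc hfin.toFinset.card < 2 ^ hfin.toFinset.card := Nat.lt_two_pow_self
    _ ≤ 2 ^ m := Nat.pow_le_pow_right (by norm_num) (by omega)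
  rw [Fintype.card_fun, Fintype.card_bool, Fintype.card_fin] at hcard
  omega

end Minimal

section Asets

variable {C₀ : Set K}

/-- Pick one fresh point in each level-`k` trace, avoiding a finite set `u`. -/
noncomputable def Apick (h : SchemeHyp S G) (hinf : ∀ σ, (C₀ ∩ Kn h σ).Infinite) (k : ℕ)
    (u : {u : Set K // u.Finite}) : Set K :=
  Set.range fun w : Fin k → Bool => (((hinf (List.ofFn w)).diff u.2).nonempty).choose

lemma Apick_spec (h : SchemeHyp S G) (hinf : ∀ σ, (C₀ ∩ Kn h σ).Infinite) (k : ℕ)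
    (u : {u : Set K // u.Finite}) (w : Fin k → Bool) :
    (((hinf (List.ofFn w)).diff u.2).nonempty).choose ∈ (C₀ ∩ Kn h (List.ofFn w)) \ u.1 :=
  (((hinf (List.ofFn w)).diff u.2).nonempty).choose_spec

lemma Apick_finite (h : SchemeHyp S G) (hinf : ∀ σ, (C₀ ∩ Kn h σ).Infinite) (k : ℕ)
    (u : {u : Set K // u.Finite}) : (Apick h hinf k u).Finite :=
  Set.finite_range _

/-- Accumulated used points. -/
noncomputable def usedA (h : SchemeHyp S G) (hinf : ∀ σ, (C₀ ∩ Kn h σ).Infinite) :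
    ℕ → {u : Set K // u.Finite}
  | 0 => ⟨∅, Set.finite_empty⟩
  | k + 1 => ⟨(usedA h hinf k).1 ∪ Apick h hinf k (usedA h hinf k),
      (usedA h hinf k).2.union (Apick_finite h hinf k _)⟩

/-- The selection sets. -/
noncomputable def AsetK (h : SchemeHyp S G) (hinf : ∀ σ, (C₀ ∩ Kn h σ).Infinite) (k : ℕ) :
    Set K :=
  Apick h hinf k (usedA h hinf k)

lemma AsetK_finite (h : SchemeHyp S G) (hinf : ∀ σ, (C₀ ∩ Kn h σ).Infinite) (k : ℕ) :
    (AsetK h hinf k).Finite := Apick_finite h hinf k _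

lemma AsetK_subset (h : SchemeHyp S G) (hinf : ∀ σ, (C₀ ∩ Kn h σ).Infinite) (k : ℕ) :
    AsetK h hinf k ⊆ C₀ := by
  rintro x ⟨w, rfl⟩
  exact (Apick_spec h hinf k _ w).1.1

lemma AsetK_hits (h : SchemeHyp S G) (hinf : ∀ σ, (C₀ ∩ Kn h σ).Infinite) (k : ℕ)
    (w : Fin k → Bool) : (AsetK h hinf k ∩ Kn h (List.ofFn w)).Nonempty :=
  ⟨_, ⟨w, rfl⟩, (Apick_spec h hinf k _ w).1.2⟩

lemma usedA_mono (h : SchemeHyp S G) (hinf : ∀ σ, (C₀ ∩ Kn h σ).Infinite) :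
    ∀ {j k : ℕ}, j ≤ k → (usedA h hinf j).1 ⊆ (usedA h hinf k).1 := by
  intro j k hjk
  induction k with
  | zero => rw [Nat.le_zero.1 hjk]
  | succ k ih =>
    rcases Nat.lt_or_ge j (k+1) with hlt | hge
    · exact (ih (Nat.lt_succ_iff.1 hlt)).trans (by rw [usedA]; exact subset_union_left)
    · rw [Nat.le_antisymm hjk hge]

lemma AsetK_subset_used (h : SchemeHyp S G) (hinf : ∀ σ, (C₀ ∩ Kn h σ).Infinite) (k : ℕ) :
    AsetK h hinf k ⊆ (usedA h hinf (k + 1)).1 := by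
  rw [usedA]; exact subset_union_right

lemma AsetK_disjoint_used (h : SchemeHyp S G) (hinf : ∀ σ, (C₀ ∩ Kn h σ).Infinite) (k : ℕ) :
    AsetK h hinf k ∩ (usedA h hinf k).1 = ∅ := by
  ext x
  simp only [Set.mem_inter_iff, Set.mem_empty_iff_false, iff_false, not_and]
  rintro ⟨w, rfl⟩
  exact fun hx => (Apick_spec h hinf k _ w).2 hx

lemma AsetK_disjoint (h : SchemeHyp S G) (hinf : ∀ σ, (C₀ ∩ Kn h σ).Infinite) {j k : ℕ}
    (hjk : j < k) : Disjoint (AsetK h hinf j) (AsetK h hinf k) := by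
  rw [Set.disjoint_iff_inter_eq_empty]
  have h1 : AsetK h hinf j ⊆ (usedA h hinf k).1 :=
    (AsetK_subset_used h hinf j).trans (usedA_mono h hinf hjk)
  have h2 := AsetK_disjoint_used h hinf k
  ext x
  simp only [Set.mem_inter_iff, Set.mem_empty_iff_false, iff_false, not_and]
  intro hxj hxk
  have : x ∈ AsetK h hinf k ∩ (usedA h hinf k).1 := ⟨hxk, h1 hxj⟩
  rw [h2] at this
  exact this

/-- Every open set meeting `C₀` meets all but finitely many `A_k`. -/
lemma AsetK_eventually_hits (h : SchemeHyp S G) (hC₀c : IsClosed C₀) (hC₀f : Full h C₀)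
    (hC₀min : ∀ D ⊆ C₀, IsClosed D → Full h D → D = C₀)
    (hinf : ∀ σ, (C₀ ∩ Kn h σ).Infinite)
    {Ω : Set K} (hΩ : IsOpen Ω) (hne : (Ω ∩ C₀).Nonempty) :
    ∃ N, ∀ k ≥ N, (AsetK h hinf k ∩ Ω).Nonempty := by
  obtain ⟨σ, hσ⟩ := trace_subset_of_isOpen h hC₀c hC₀f hC₀min hΩ hne
  refine ⟨σ.length, fun k hk => ?_⟩
  obtain ⟨w, hw⟩ := exists_ofFn (k := k) (List.replicate (k - σ.length) false ++ σ)
    (by simp only [List.length_append, List.length_replicate]; omega)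
  obtain ⟨x, hxA, hxK⟩ := AsetK_hits h hinf k w
  rw [hw] at hxK
  have hxσ : x ∈ Kn h σ := Kn_append_subset h _ _ hxK
  exact ⟨x, hxA, hσ ⟨AsetK_subset h hinf k hxA, hxσ⟩⟩

end Asets

section Baire

variable {C₀ : Set K}

/-- The Baire category argument: given open sets containing the `A_{κ j}`'s, some point of `C₀`
belongs to infinitely many of them. -/
lemma exists_frequently_mem (h : SchemeHyp S G) (hC₀c : IsClosed C₀) (hC₀f : Full h C₀)
    (hC₀min : ∀ D ⊆ C₀, IsClosed D → Full h D → D = C₀)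
    (hinf : ∀ σ, (C₀ ∩ Kn h σ).Infinite)
    (Ω : ℕ → Set K) (hΩo : ∀ j, IsOpen (Ω j)) (κ : ℕ → ℕ) (hκ : StrictMono κ)
    (hsub : ∀ j, AsetK h hinf (κ j) ⊆ Ω j) :
    ∃ z ∈ C₀, ∀ N : ℕ, ∃ j ≥ N, z ∈ Ω j := by
  have hC₀comp : IsCompact C₀ := hC₀c.isCompact
  haveI : CompactSpace ↥C₀ := isCompact_iff_compactSpace.1 hC₀comp
  have hC₀ne : C₀.Nonempty := (hC₀f []).mono inter_subset_left
  haveI : Nonempty ↥C₀ := hC₀ne.to_subtype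
  set W : ℕ → Set ↥C₀ := fun N => ⋃ j ∈ {j : ℕ | N ≤ j}, (Subtype.val ⁻¹' Ω j) with hW
  have hWo : ∀ N, IsOpen (W N) :=
    fun N => isOpen_biUnion fun j _ => (hΩo j).preimage continuous_subtype_val
  have hWd : ∀ N, Dense (W N) := by
    intro N
    rw [dense_iff_inter_open]
    intro U hU hUne
    obtain ⟨Ω', hΩ'o, hΩ'pre⟩ := isOpen_induced_iff.1 hU
    obtain ⟨x, hxU⟩ := hUne
    have hxΩ' : (x : K) ∈ Ω' := by rw [← hΩ'pre] at hxU; exact hxU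
    have hne : (Ω' ∩ C₀).Nonempty := ⟨x.1, hxΩ', x.2⟩
    obtain ⟨M, hM⟩ := AsetK_eventually_hits h hC₀c hC₀f hC₀min hinf hΩ'o hne
    set j := max N M with hj
    obtain ⟨a, haA, haΩ'⟩ := hM (κ j) ((le_max_right N M).trans hκ.le_apply)
    have haC : a ∈ C₀ := AsetK_subset h hinf (κ j) haA
    refine ⟨⟨a, haC⟩, ?_, ?_⟩
    · rw [← hΩ'pre]; exact haΩ'
    · exact mem_biUnion (le_max_left N M) (hsub j haA)
  have hdense : Dense (⋂ N, W N) := dense_iInter_of_isOpen hWo hWd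
  obtain ⟨z, hz⟩ := hdense.nonempty
  refine ⟨z.1, z.2, fun N => ?_⟩
  have := mem_iInter.1 hz N
  obtain ⟨j, hjN, hzj⟩ := mem_iUnion₂.1 this
  exact ⟨j, hjN, hzj⟩

end Baire



variable {X : Type*} [TopologicalSpace X]

def toCM (f : Cp X) : C(X, ℝ) := f
def ofCM (f : C(X, ℝ)) : Cp X := f

lemma continuous_coeCp : Continuous (fun f : Cp X => ((toCM f : C(X,ℝ)) : X → ℝ)) :=
  continuous_induced_dom

lemma continuous_evalCp (x : X) : Continuous (fun f : Cp X => toCM f x) :=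
  (continuous_apply x).comp continuous_coeCp

lemma isOpen_iff_Cp (U : Set (Cp X)) :
    IsOpen U ↔ ∃ t : Set (X → ℝ), IsOpen t ∧
      (fun f : Cp X => ((toCM f : C(X,ℝ)) : X → ℝ)) ⁻¹' t = U :=
  isOpen_induced_iff.symm

/-- clamp to `[0,1]` -/
noncomputable def clamp (t : ℝ) : ℝ := max 0 (min 1 t)

lemma continuous_clamp : Continuous clamp :=
  continuous_const.max (continuous_const.min continuous_id)

lemma clamp_nonneg (t : ℝ) : 0 ≤ clamp t := le_max_left _ _

lemma clamp_of_nonpos {t : ℝ} (ht : t ≤ 0) : clamp t = 0 := by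
  have : min 1 t ≤ 0 := le_trans (min_le_right _ _) ht
  simp [clamp, max_eq_left this]

lemma clamp_of_one_le {t : ℝ} (ht : 1 ≤ t) : clamp t = 1 := by
  simp [clamp, min_eq_left ht]

lemma le_of_le_clamp {t ε : ℝ} (hε : 0 < ε) (h : ε ≤ clamp t) : ε ≤ t := by
  rcases le_max_iff.1 h with h0 | h1
  · linarith
  · exact h1.trans (min_le_right _ _)

lemma continuous_finset_inf' {ι Z : Type*} [TopologicalSpace Z] (s : Finset ι)
    (hs : s.Nonempty) (f : ι → Z → ℝ) (hf : ∀ i, Continuous (f i)) :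
    Continuous fun x => s.inf' hs fun i => f i x := by
  induction hs using Finset.Nonempty.cons_induction with
  | singleton a => simpa using hf a
  | cons a s ha hs ih =>
      have : (fun x => (Finset.cons a s ha).inf' (Finset.cons_nonempty ha) fun i => f i x)
          = fun x => min (f a x) (s.inf' hs fun i => f i x) := by
        funext x
        rw [Finset.inf'_cons]
      rw [this]
      exact (hf a).min ih

/-- Urysohn gadget for finite sets in completely regular spaces. -/
lemma exists_separating_fun [T2Space X] (hcr : CompletelyRegularSpace X) {F S : Set X}
    (hF : F.Finite) (hS : S.Finite) (hdisj : ∀ x ∈ F, x ∉ S) (c : ℝ) :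
    ∃ g : C(X, ℝ), (∀ x ∈ F, g x = c) ∧ (∀ x ∈ S, g x = 0) := by
  classical
  have hch : ∀ a ∈ F, ∃ φ : X → ℝ, Continuous φ ∧ φ a = c ∧
      ∀ x ∈ S ∪ (F \ {a}), φ x = 0 := by
    intro a ha
    have hclosed : IsClosed (S ∪ (F \ {a})) := (hS.union (hF.diff (t := {a}))).isClosed
    have hnot : a ∉ S ∪ (F \ {a}) := by
      rintro (h | h)
      · exact hdisj a ha h
      · exact h.2 rfl
    obtain ⟨f, hfc, hfa, hfK⟩ := hcr.completely_regular a _ hclosed hnot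
    refine ⟨fun x => c * (1 - (f x : ℝ)), ?_, by simp [hfa], ?_⟩
    · exact continuous_const.mul (continuous_const.sub (continuous_subtype_val.comp hfc))
    · intro x hx
      have : f x = 1 := hfK hx
      simp [this]
  choose! φ hφc hφa hφ0 using hch
  refine ⟨⟨fun x => ∑ a ∈ hF.toFinset, φ a x, ?_⟩, ?_, ?_⟩
  · exact continuous_finset_sum _ fun a ha => hφc a (hF.mem_toFinset.1 ha)
  · intro x hx
    show (∑ a ∈ hF.toFinset, φ a x) = c
    rw [Finset.sum_eq_single x]
    · exact hφa x hx
    · intro b hb hbx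
      exact hφ0 b (hF.mem_toFinset.1 hb) x (mem_union_right _ ⟨hx, by simpa using (Ne.symm hbx)⟩)
    · intro hxx
      exact absurd (hF.mem_toFinset.2 hx) hxx
  · intro x hxS
    show (∑ a ∈ hF.toFinset, φ a x) = 0
    exact Finset.sum_eq_zero fun a ha => hφ0 a (hF.mem_toFinset.1 ha) x (mem_union_left _ hxS)

/-- The test functionals on `C_p(X)`. -/
noncomputable def GKfun (F : ℕ → Finset X) (hF : ∀ k, (F k).Nonempty) (k : ℕ) :
    C(Cp X, ℝ) :=
  ⟨fun f => clamp (((F k).inf' (hF k) fun a => toCM f a) - k), by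
    refine continuous_clamp.comp (Continuous.sub ?_ continuous_const)
    exact continuous_finset_inf' _ _ _ fun a => continuous_evalCp a⟩

lemma GKfun_apply (F : ℕ → Finset X) (hF : ∀ k, (F k).Nonempty) (k : ℕ) (f : Cp X) :
    GKfun F hF k f = clamp (((F k).inf' (hF k) fun a => toCM f a) - k) := rfl


end CechAscoliAux

/-- If `X` is Čech-complete and `C_p(X)` is Ascoli, then `X` is scattered. -/
theorem scattered_of_cechComplete_of_ascoli_Cp (X : Type u) [TopologicalSpace X]
    (hX : CechComplete X) (h : AscoliSpace (Cp X)) : Scattered X := by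
  classical
  obtain ⟨hcr, ht2, K, tK, e, hKc, hKt2, hemb, hdens, G, hGo, hGeq⟩ := hX
  letI := tK
  haveI := hKc
  haveI := hKt2
  haveI := ht2
  haveI := hcr
  by_contra hsc
  have hsc' : ¬ ∀ A : Set X, A.Nonempty → ∃ a ∈ A, ∃ U : Set X, IsOpen U ∧ U ∩ A = {a} := hsc
  push_neg at hsc'
  obtain ⟨A₀, hA₀ne, hA₀⟩ := hsc'
  -- the image of `A₀` in the compactification, with no relative isolated points
  set S : Set K := e '' A₀ with hS
  have hSne : S.Nonempty := hA₀ne.image e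
  have hrange : Set.range e ⊆ ⋂ n, G n := le_of_eq hGeq.symm
  have hSG : ∀ n, S ⊆ G n := fun n x hx =>
    mem_iInter.1 (hrange (Set.image_subset_range e A₀ hx)) n
  have hSni : ∀ z ∈ S, ∀ Ω : Set K, IsOpen Ω → z ∈ Ω → ∃ z' ∈ S ∩ Ω, z' ≠ z := by
    rintro z ⟨a, haA, rfl⟩ Ω hΩo hzΩ
    have hU : IsOpen (e ⁻¹' Ω) := hΩo.preimage hemb.continuous
    have hne := hA₀ a haA (e ⁻¹' Ω) hU
    have haU : a ∈ e ⁻¹' Ω ∩ A₀ := ⟨hzΩ, haA⟩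
    have hex : ∃ b ∈ e ⁻¹' Ω ∩ A₀, b ≠ a := by
      by_contra hb
      push_neg at hb
      exact hne (Set.eq_singleton_iff_unique_mem.2 ⟨haU, hb⟩)
    obtain ⟨b, ⟨hbΩ, hbA⟩, hba⟩ := hex
    exact ⟨e b, ⟨Set.mem_image_of_mem e hbA, hbΩ⟩, fun hbe => hba (hemb.injective hbe)⟩
  have hyp : CechAscoliAux.SchemeHyp S G := ⟨hGo, hSne, hSG, hSni⟩
  obtain ⟨C₀, hC₀sub, hC₀c, hC₀f, hC₀min⟩ := CechAscoliAux.exists_minimal_full hyp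
  have hinf : ∀ σ, (C₀ ∩ CechAscoliAux.Kn hyp σ).Infinite :=
    fun σ => CechAscoliAux.trace_infinite hyp hC₀f σ
  have hC₀range : C₀ ⊆ Set.range e := by
    intro x hx
    rw [← hGeq]
    exact mem_iInter.2 fun n => CechAscoliAux.Cs_subset_G hyp n (hC₀sub hx)
  -- pull the selection sets back to `X`
  set AA : ℕ → Set X := fun k => e ⁻¹' (CechAscoliAux.AsetK hyp hinf k) with hAA
  have hAAfin : ∀ k, (AA k).Finite :=
    fun k => (CechAscoliAux.AsetK_finite hyp hinf k).preimage hemb.injective.injOn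
  have hAAne : ∀ k, (AA k).Nonempty := by
    intro k
    obtain ⟨x, hxA, -⟩ := CechAscoliAux.AsetK_hits hyp hinf k (fun _ => false)
    obtain ⟨y, rfl⟩ := hC₀range (CechAscoliAux.AsetK_subset hyp hinf k hxA)
    exact ⟨y, hxA⟩
  set Fk : ℕ → Finset X := fun k => (hAAfin k).toFinset with hFk
  have hFkne : ∀ k, (Fk k).Nonempty := fun k => (hAAfin k).toFinset_nonempty.2 (hAAne k)
  set GK : ℕ → C(Cp X, ℝ) := CechAscoliAux.GKfun Fk hFkne with hGK
  -- `GK k → 0` uniformly on every compact subset of `C_p(X)`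
  have htend : Tendsto GK atTop (𝓝 (0 : C(Cp X, ℝ))) := by
    rw [ContinuousMap.tendsto_iff_forall_isCompact_tendstoUniformlyOn]
    intro 𝒞 h𝒞
    rw [Metric.tendstoUniformlyOn_iff]
    intro ε hε
    by_contra hcon
    rw [Filter.not_eventually] at hcon
    have hfreq : ∃ᶠ n in atTop, ∃ f ∈ 𝒞, ε ≤ GK n f := by
      refine hcon.mono fun n hn => ?_
      push_neg at hn
      obtain ⟨f, hf𝒞, hfd⟩ := hn
      refine ⟨f, hf𝒞, ?_⟩
      have h0 : (0 : C(Cp X, ℝ)) f = 0 := rfl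
      have hd : dist ((0 : C(Cp X, ℝ)) f) (GK n f) = |GK n f| := by
        rw [h0, Real.dist_eq, zero_sub, abs_neg]
      have habs : |GK n f| = GK n f := by
        refine abs_of_nonneg ?_
        rw [hGK, CechAscoliAux.GKfun_apply]
        exact CechAscoliAux.clamp_nonneg _
      calc ε ≤ dist ((0 : C(Cp X, ℝ)) f) (GK n f) := hfd
      _ = GK n f := by rw [hd, habs]
    obtain ⟨φ, hφmono, hφ⟩ := Filter.extraction_of_frequently_atTop hfreq
    choose f hf𝒞 hfval using hφ
    have hbig : ∀ j, ∀ x ∈ AA (φ j), ((φ j : ℝ)) < CechAscoliAux.toCM (f j) x := by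
      intro j x hx
      have h1 : ε ≤ ((Fk (φ j)).inf' (hFkne (φ j)) fun a => CechAscoliAux.toCM (f j) a)
          - (φ j : ℝ) := by
        have hv := hfval j
        rw [hGK, CechAscoliAux.GKfun_apply] at hv
        exact CechAscoliAux.le_of_le_clamp hε hv
      have h2 : ((Fk (φ j)).inf' (hFkne (φ j)) fun a => CechAscoliAux.toCM (f j) a)
          ≤ CechAscoliAux.toCM (f j) x :=
        Finset.inf'_le _ ((hAAfin (φ j)).mem_toFinset.2 hx)
      linarith
    set V : ℕ → Set X := fun j => {x | ((φ j : ℝ)) < CechAscoliAux.toCM (f j) x} with hV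
    have hVo : ∀ j, IsOpen (V j) := fun j =>
      isOpen_lt continuous_const (CechAscoliAux.toCM (f j)).continuous
    have hΩex : ∀ j, ∃ Ωj : Set K, IsOpen Ωj ∧ e ⁻¹' Ωj = V j :=
      fun j => (hemb.toIsInducing.isOpen_iff).1 (hVo j)
    choose Ω hΩo hΩpre using hΩex
    have hsub : ∀ j, CechAscoliAux.AsetK hyp hinf (φ j) ⊆ Ω j := by
      intro j a ha
      obtain ⟨x, rfl⟩ := hC₀range (CechAscoliAux.AsetK_subset hyp hinf _ ha)
      have hxV : x ∈ V j := hbig j x ha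
      rw [← hΩpre j] at hxV
      exact hxV
    obtain ⟨z, hzC, hzio⟩ := CechAscoliAux.exists_frequently_mem hyp hC₀c hC₀f hC₀min hinf
      Ω hΩo φ hφmono hsub
    obtain ⟨x₁, rfl⟩ := hC₀range hzC
    have hbdd : BddAbove ((fun f : Cp X => CechAscoliAux.toCM f x₁) '' 𝒞) :=
      (h𝒞.image (CechAscoliAux.continuous_evalCp x₁)).bddAbove
    obtain ⟨M, hM⟩ := hbdd
    obtain ⟨N, hNM⟩ := exists_nat_gt M
    obtain ⟨j, hjN, hzj⟩ := hzio N
    have hx₁V : x₁ ∈ V j := by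
      have : x₁ ∈ e ⁻¹' (Ω j) := hzj
      rwa [hΩpre j] at this
    have h1 : ((φ j : ℝ)) < CechAscoliAux.toCM (f j) x₁ := hx₁V
    have h2 : CechAscoliAux.toCM (f j) x₁ ≤ M := hM ⟨f j, hf𝒞 j, rfl⟩
    have h3 : (N : ℝ) ≤ (φ j : ℝ) := Nat.cast_le.2 (hjN.trans hφmono.le_apply)
    linarith
  have hcomp : IsCompact (insert (0 : C(Cp X, ℝ)) (Set.range GK)) :=
    htend.isCompact_insert_range
  -- apply the Ascoli hypothesis and derive a contradiction
  set x₀ : Cp X := CechAscoliAux.ofCM 0 with hx₀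
  have hx₀V : (0 : C(Cp X, ℝ)) x₀ ∈ Set.Ioo (-1 : ℝ) 1 := by
    have : (0 : C(Cp X, ℝ)) x₀ = 0 := rfl
    rw [this]
    exact Set.mem_Ioo.2 ⟨by norm_num, by norm_num⟩
  obtain ⟨U, hUo, hUx₀, W, hWo, hW0, himp⟩ :=
    h _ hcomp x₀ 0 (Set.mem_insert _ _) (Set.Ioo (-1) 1) isOpen_Ioo hx₀V
  have hW0' : (0 : ℝ) ∈ W := hW0
  obtain ⟨U', hU'o, hU'pre⟩ := (CechAscoliAux.isOpen_iff_Cp U).1 hUo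
  have hx₀U' : (fun _ => (0 : ℝ)) ∈ U' := by
    have : x₀ ∈ (fun f : Cp X => ((CechAscoliAux.toCM f : C(X, ℝ)) : X → ℝ)) ⁻¹' U' := by
      rw [hU'pre]; exact hUx₀
    exact this
  obtain ⟨I, u, hIu, hpi⟩ := isOpen_pi_iff.1 hU'o _ hx₀U'
  -- find `k` with `A_k` disjoint from `I`
  have hz₀ : C₀.Nonempty := (hC₀f []).mono inter_subset_left
  obtain ⟨z₀, -⟩ := hz₀
  set bad : Set ℕ := {k | ((CechAscoliAux.AsetK hyp hinf k) ∩ (e '' ↑I)).Nonempty} with hbad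
  have hpickex : ∀ k : ℕ, ∃ y : K,
      k ∈ bad → y ∈ (CechAscoliAux.AsetK hyp hinf k) ∩ (e '' ↑I) := by
    intro k
    by_cases hk : k ∈ bad
    · exact ⟨hk.choose, fun _ => hk.choose_spec⟩
    · exact ⟨z₀, fun hkk => absurd hkk hk⟩
  choose pick hpickmem using hpickex
  have hbadfin : bad.Finite := by
    refine Set.Finite.of_finite_image (f := pick) ?_ ?_
    · refine ((I.finite_toSet.image e)).subset ?_
      rintro y ⟨k, hk, rfl⟩
      exact (hpickmem k hk).2
    · intro k hk k' hk' heq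
      by_contra hne
      rcases Nat.lt_or_ge k k' with hlt | hge
      · exact (CechAscoliAux.AsetK_disjoint hyp hinf hlt).ne_of_mem
          (hpickmem k hk).1 (hpickmem k' hk').1 heq
      · have hlt : k' < k := lt_of_le_of_ne hge (Ne.symm hne)
        exact (CechAscoliAux.AsetK_disjoint hyp hinf hlt).ne_of_mem
          (hpickmem k' hk').1 (hpickmem k hk).1 heq.symm
  obtain ⟨k, hk⟩ := hbadfin.infinite_compl.nonempty
  have hknot : ¬ ((CechAscoliAux.AsetK hyp hinf k) ∩ (e '' ↑I)).Nonempty := hk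
  have hdisjFS : ∀ x ∈ AA k, x ∉ (↑I : Set X) := by
    intro x hx hxI
    exact hknot ⟨e x, hx, Set.mem_image_of_mem e hxI⟩
  obtain ⟨g, hgF, hgS⟩ := CechAscoliAux.exists_separating_fun hcr (hAAfin k)
    I.finite_toSet hdisjFS ((k : ℝ) + 1)
  set gp : Cp X := CechAscoliAux.ofCM g with hgp
  have hgU : gp ∈ U := by
    rw [← hU'pre]
    refine hpi ?_
    rw [Set.mem_pi]
    intro a haI
    have hval : CechAscoliAux.toCM gp a = 0 := hgS a haI
    show CechAscoliAux.toCM gp a ∈ u a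
    rw [hval]
    exact (hIu a haI).2
  have hGKx₀ : GK k x₀ = 0 := by
    rw [hGK, CechAscoliAux.GKfun_apply]
    have hconst : ((Fk k).inf' (hFkne k) fun a => CechAscoliAux.toCM x₀ a) = 0 := by
      rw [Finset.inf'_congr (hFkne k) rfl (f := fun a => CechAscoliAux.toCM x₀ a)
        (g := fun _ => (0 : ℝ)) (fun x _ => rfl)]
      exact Finset.inf'_const _ _
    rw [hconst]
    exact CechAscoliAux.clamp_of_nonpos (by simp)
  have hGKgp : GK k gp = 1 := by
    rw [hGK, CechAscoliAux.GKfun_apply]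
    have hconst : ((Fk k).inf' (hFkne k) fun a => CechAscoliAux.toCM gp a) = (k : ℝ) + 1 := by
      rw [Finset.inf'_congr (hFkne k) rfl (f := fun a => CechAscoliAux.toCM gp a)
        (g := fun _ => ((k : ℝ) + 1))
        (fun x hx => hgF x ((hAAfin k).mem_toFinset.1 hx))]
      exact Finset.inf'_const _ _
    rw [hconst]
    exact CechAscoliAux.clamp_of_one_le (by linarith)
  have hfinal := himp (GK k) (Set.mem_insert_of_mem _ ⟨k, rfl⟩)
    (by rw [hGKx₀]; exact hW0') gp hgU
  rw [hGKgp] at hfinal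
  exact (lt_irrefl (1 : ℝ)) hfinal.2
end
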